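/- Fix integers m ≥ 1 and n ≥ 1 and a permutation σ ∈ S_n with ℓ cycles. The number of labelled m-ballot paths of size n fixed under the action of σ — equivalently, the number of (1,m,…,m)-parking functions f : {1,…,n} → ℕ that are constant on every cycle of σ — equals (mn+1)^{ℓ−1}. -/

import Mathlib

namespace CycleParking

/-- number of values of `f` below `s` -/
def pc {n : ℕ} (f : Fin n → ℕ) (s : ℕ) : ℕ :=
  (Finset.univ.filter fun i => f i < s).card

def IsMParking' (m n : ℕ) (f : Fin n → ℕ) : Prop :=
  ∀ j : ℕ, 1 ≤ j → j ≤ n →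
    j ≤ (Finset.univ.filter fun i : Fin n => f i ≤ m * (j - 1)).card

lemma parking_iff {m n : ℕ} (hm : 1 ≤ m) (hn : 1 ≤ n) (f : Fin n → ℕ) :
    IsMParking' m n f ↔ ∀ s, 1 ≤ s → s ≤ m * n → s ≤ m * pc f s := by
  constructor
  · intro h s hs1 hs2
    set j := (s - 1) / m + 1 with hj
    have hjn : j ≤ n := by
      have : (s - 1) / m < n := (Nat.div_lt_iff_lt_mul hm).2 (by rw [Nat.mul_comm]; omega)
      omega
    have hdm := Nat.div_add_mod (s - 1) m
    have hmod : (s - 1) % m < m := Nat.mod_lt _ hm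
    have hcard := h j (Nat.le_add_left 1 _) hjn
    have hsub : (Finset.univ.filter fun i : Fin n => f i ≤ m * (j - 1)).card ≤ pc f s := by
      apply Finset.card_le_card
      intro i hi
      simp only [Finset.mem_filter, Finset.mem_univ, true_and] at hi ⊢
      have hje : m * (j - 1) = m * ((s - 1) / m) := by rw [hj]; simp
      omega
    have hmj : m * j = m * ((s - 1) / m) + m := by rw [hj, Nat.mul_add, Nat.mul_one]
    have h2 : m * j ≤ m * pc f s := Nat.mul_le_mul_left m (le_trans hcard hsub)
    omega
  · intro h j hj1 hjn
    have hmle : m * (j - 1) + 1 ≤ m * n := by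
      have h1 : m * (j - 1) ≤ m * (n - 1) := Nat.mul_le_mul_left m (by omega)
      have h2 : m * (n - 1) + m = m * n := by
        obtain ⟨k, rfl⟩ : ∃ k, n = k + 1 := ⟨n - 1, by omega⟩
        simp [Nat.mul_succ]
      omega
    have h3 := h (m * (j - 1) + 1) (by omega) hmle
    have h4 : pc f (m * (j - 1) + 1)
        = (Finset.univ.filter fun i : Fin n => f i ≤ m * (j - 1)).card := by
      unfold pc; congr 1; ext i; simp [Nat.lt_succ_iff]
    rw [h4] at h3
    by_contra hcon
    have hle : (Finset.univ.filter fun i : Fin n => f i ≤ m * (j - 1)).card ≤ j - 1 := by omega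
    have := Nat.mul_le_mul_left m hle
    omega

lemma parking_lt {m n : ℕ} (hn : 1 ≤ n) (f : Fin n → ℕ) (hf : IsMParking' m n f) :
    ∀ i, f i < m * n + 1 := by
  intro i
  have h1 := hf n hn le_rfl
  have h2 : (Finset.univ.filter fun i : Fin n => f i ≤ m * (n - 1)).card ≤ n := by
    simpa using Finset.card_le_univ (Finset.univ.filter fun i : Fin n => f i ≤ m * (n - 1))
  have heq : (Finset.univ.filter fun i : Fin n => f i ≤ m * (n - 1)) = Finset.univ := by
    apply Finset.eq_univ_of_card
    simp only [Fintype.card_fin]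
    omega
  have hi : f i ≤ m * (n - 1) := by
    have := Finset.mem_univ i
    rw [← heq] at this
    exact (Finset.mem_filter.1 this).2
  have : m * (n - 1) ≤ m * n := Nat.mul_le_mul_left m (by omega)
  omega



/-- extended count function (the "infinite walk" count) -/
def cntE (m n : ℕ) (a : Fin n → ZMod (m * n + 1)) (t : ℕ) : ℕ :=
  pc (fun i => (a i).val) (t % (m * n + 1)) + n * (t / (m * n + 1))

/-- the walk -/
def Wf (m n : ℕ) (a : Fin n → ZMod (m * n + 1)) (t : ℕ) : ℤ :=
  (m * cntE m n a t : ℤ) - t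

lemma cntE_eval (a : Fin n → ZMod (m * n + 1)) {t : ℕ} (h : t ≤ m * n + 1) :
    cntE m n a t = pc (fun i => (a i).val) t := by
  rcases lt_or_eq_of_le h with h' | h'
  · unfold cntE
    rw [Nat.mod_eq_of_lt h', Nat.div_eq_of_lt h', Nat.mul_zero, Nat.add_zero]
  · subst h'
    unfold cntE
    rw [Nat.mod_self, Nat.div_self (by omega), Nat.mul_one]
    have h0 : pc (fun i => (a i).val) 0 = 0 := by simp [pc]
    have hN : pc (fun i => (a i).val) (m * n + 1) = n := by
      unfold pc
      have : (Finset.univ.filter fun i : Fin n => (a i).val < m * n + 1) = Finset.univ := by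
        apply Finset.eq_univ_of_forall
        intro i
        simp only [Finset.mem_filter, Finset.mem_univ, true_and]
        exact ZMod.val_lt _
      rw [this, Finset.card_univ, Fintype.card_fin]
    rw [h0, hN, Nat.zero_add]

lemma Wf_period (a : Fin n → ZMod (m * n + 1)) (t : ℕ) :
    Wf m n a (t + (m * n + 1)) = Wf m n a t - 1 := by
  unfold Wf cntE
  rw [Nat.add_mod_right, Nat.add_div_right _ (by omega)]
  push_cast [Nat.mul_succ]
  ring

lemma cntE_shift (a : Fin n → ZMod (m * n + 1)) (c : ZMod (m * n + 1)) {s : ℕ}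
    (hs : s ≤ m * n + 1) :
    cntE m n a ((-c).val + s)
      = cntE m n a (-c).val + pc (fun i => (a i + c).val) s := by
  set u := (-c).val with hu
  have huN : u < (m*n+1) := ZMod.val_lt _
  have key : ∀ i : Fin n,
      ((a i).val = u + (a i + c).val ∧ u + (a i + c).val < m * n + 1) ∨
      ((a i).val + (m * n + 1) = u + (a i + c).val) := by
    intro i
    have h1 : a i = -c + (a i + c) := by ring
    have h2 : (a i).val = (u + (a i + c).val) % (m*n+1) := by
      conv_lhs => rw [h1]
      rw [ZMod.val_add]
    have h3 : (a i + c).val < (m*n+1) := ZMod.val_lt _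
    have h4 : (a i).val < (m*n+1) := ZMod.val_lt _
    rcases lt_or_ge (u + (a i + c).val) (m*n+1) with h | h
    · left
      exact ⟨by rw [h2, Nat.mod_eq_of_lt h], h⟩
    · right
      have h5 : (u + (a i + c).val) % (m*n+1) = u + (a i + c).val - (m*n+1) := by
        rw [Nat.mod_eq_sub_mod h, Nat.mod_eq_of_lt (by omega)]
      omega
  rw [cntE_eval a (le_of_lt huN)]
  rcases le_or_gt (u + s) (m*n+1) with hc | hc
  · -- no wrap-around
    rw [cntE_eval a hc]
    unfold pc
    have hset : (Finset.univ.filter fun i : Fin n => (a i).val < u + s)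
        = (Finset.univ.filter fun i : Fin n => (a i).val < u)
          ∪ (Finset.univ.filter fun i : Fin n => (a i + c).val < s) := by
      ext i
      simp only [Finset.mem_filter, Finset.mem_univ, true_and, Finset.mem_union]
      rcases key i with ⟨h1, h2⟩ | h1 <;>
        · have h3 : (a i + c).val < (m*n+1) := ZMod.val_lt _
          omega
    have hdisj : Disjoint (Finset.univ.filter fun i : Fin n => (a i).val < u)
        (Finset.univ.filter fun i : Fin n => (a i + c).val < s) := by
      rw [Finset.disjoint_left]
      intro i hi1 hi2
      simp only [Finset.mem_filter, Finset.mem_univ, true_and] at hi1 hi2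
      rcases key i with ⟨h1, h2⟩ | h1 <;> omega
    rw [hset, Finset.card_union_of_disjoint hdisj]
  · -- wrap-around
    obtain ⟨t, ht, htN⟩ : ∃ t, u + s = t + (m * n + 1) ∧ t < (m*n+1) := ⟨u + s - (m*n+1), by omega, by omega⟩
    rw [ht]
    unfold cntE
    rw [Nat.add_mod_right, Nat.add_div_right _ (by omega), Nat.mod_eq_of_lt htN,
      Nat.div_eq_of_lt htN]
    have htotal := Finset.card_filter_add_card_filter_not
      (s := (Finset.univ : Finset (Fin n))) (fun i => (a i).val < u)
    rw [Finset.card_univ, Fintype.card_fin] at htotal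
    have hset : (Finset.univ.filter fun i : Fin n => (a i + c).val < s)
        = (Finset.univ.filter fun i : Fin n => (a i).val < t)
          ∪ (Finset.univ.filter fun i : Fin n => ¬ (a i).val < u) := by
      ext i
      simp only [Finset.mem_filter, Finset.mem_univ, true_and, Finset.mem_union]
      rcases key i with ⟨h1, h2⟩ | h1 <;>
        · have h3 : (a i + c).val < (m*n+1) := ZMod.val_lt _
          omega
    have hdisj : Disjoint (Finset.univ.filter fun i : Fin n => (a i).val < t)
        (Finset.univ.filter fun i : Fin n => ¬ (a i).val < u) := by
      rw [Finset.disjoint_left]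
      intro i hi1 hi2
      simp only [Finset.mem_filter, Finset.mem_univ, true_and] at hi1 hi2
      omega
    simp only [pc]
    rw [hset, Finset.card_union_of_disjoint hdisj]
    omega


variable {m n : ℕ}


/-- "good starting point" predicate -/
def Gd (m n : ℕ) (a : Fin n → ZMod (m * n + 1)) (u : ℕ) : Prop :=
  ∀ s, 1 ≤ s → s ≤ m * n → Wf m n a u ≤ Wf m n a (u + s)

lemma Wf_shift (a : Fin n → ZMod (m * n + 1)) (c : ZMod (m * n + 1)) {s : ℕ}
    (hs : s ≤ m * n + 1) :
    Wf m n a ((-c).val + s)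
      = Wf m n a (-c).val + ((m * pc (fun i => (a i + c).val) s : ℕ) : ℤ) - s := by
  unfold Wf
  rw [cntE_shift a c hs]
  push_cast
  ring

lemma good_iff (hm : 1 ≤ m) (hn : 1 ≤ n) (a : Fin n → ZMod (m * n + 1))
    (c : ZMod (m * n + 1)) :
    IsMParking' m n (fun i => (a i + c).val) ↔ Gd m n a (-c).val := by
  rw [parking_iff hm hn]
  unfold Gd
  constructor
  · intro H s h1 h2
    have h3 := H s h1 h2
    rw [Wf_shift a c (by omega)]
    omega
  · intro H s h1 h2
    have h3 := H s h1 h2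
    rw [Wf_shift a c (by omega)] at h3
    omega

lemma exists_good (hn : 1 ≤ n) (a : Fin n → ZMod (m * n + 1)) :
    ∃ u, u < m * n + 1 ∧ Gd m n a u ∧ ∀ v, v < m * n + 1 → Gd m n a v → v = u := by
  classical
  obtain ⟨u₀, hu₀, hmin⟩ := Finset.exists_min_image (Finset.range (m * n + 1))
    (Wf m n a) ⟨0, Finset.mem_range.2 (by omega)⟩
  simp only [Finset.mem_range] at hu₀
  have hminr : ∀ t, t < m * n + 1 → Wf m n a u₀ ≤ Wf m n a t := by
    intro t ht
    exact hmin t (Finset.mem_range.2 ht)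
  -- least element attaining the minimum
  have hex : ∃ u, Wf m n a u ≤ Wf m n a u₀ := ⟨u₀, le_rfl⟩
  set u₁ := Nat.find hex with hu₁
  have hfind : Wf m n a u₁ ≤ Wf m n a u₀ := Nat.find_spec hex
  have hle : u₁ ≤ u₀ := Nat.find_min' hex le_rfl
  have hu₁N : u₁ < m * n + 1 := lt_of_le_of_lt hle hu₀
  have hmin₁ : ∀ t, t < m * n + 1 → Wf m n a u₁ ≤ Wf m n a t := by
    intro t ht
    exact le_trans hfind (hminr t ht)
  have hstrict : ∀ v, v < u₁ → Wf m n a u₁ < Wf m n a v := by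
    intro v hv
    have hv' : ¬ Wf m n a v ≤ Wf m n a u₀ := Nat.find_min hex hv
    omega
  refine ⟨u₁, hu₁N, ?_, ?_⟩
  · intro s h1 h2
    rcases lt_or_ge (u₁ + s) (m * n + 1) with h | h
    · exact hmin₁ _ h
    · obtain ⟨t, ht, htlt⟩ : ∃ t, u₁ + s = t + (m * n + 1) ∧ t < u₁ :=
        ⟨u₁ + s - (m * n + 1), by omega, by omega⟩
      rw [ht, Wf_period]
      have := hstrict t htlt
      omega
  · intro v hvN hgd
    by_contra hne
    rcases lt_or_gt_of_ne hne with h | h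
    · -- v < u₁
      have h1 := hgd (u₁ - v) (by omega) (by omega)
      rw [show v + (u₁ - v) = u₁ by omega] at h1
      have := hstrict v h
      omega
    · -- u₁ < v
      have h1 := hgd (u₁ + (m * n + 1) - v) (by omega) (by omega)
      rw [show v + (u₁ + (m * n + 1) - v) = u₁ + (m * n + 1) by omega, Wf_period] at h1
      have := hmin₁ v hvN
      omega

lemma existsUnique_c (hm : 1 ≤ m) (hn : 1 ≤ n) (a : Fin n → ZMod (m * n + 1)) :
    ∃! c : ZMod (m * n + 1), IsMParking' m n (fun i => (a i + c).val) := by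
  obtain ⟨u, huN, hgd, huniq⟩ := exists_good hn a
  refine ⟨-(u : ZMod (m * n + 1)), ?_, ?_⟩
  · beta_reduce
    rw [good_iff hm hn, neg_neg, ZMod.val_cast_of_lt huN]
    exact hgd
  · intro c hc
    rw [good_iff hm hn] at hc
    have h1 : (-c).val = u := huniq (-c).val (ZMod.val_lt _) hc
    have h2 : (((-c).val : ℕ) : ZMod (m * n + 1)) = (u : ZMod (m * n + 1)) := by rw [h1]
    rw [ZMod.natCast_val, ZMod.cast_id] at h2
    rw [← h2, neg_neg]


end CycleParking


def Cycles {n : ℕ} (σ : Equiv.Perm (Fin n)) : Type :=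
  Quotient (Equiv.Perm.SameCycle.setoid σ)
noncomputable def numCycles {n : ℕ} (σ : Equiv.Perm (Fin n)) : ℕ :=
  Nat.card (Cycles σ)
def IsMParking (m n : ℕ) (f : Fin n → ℕ) : Prop :=
  ∀ j : ℕ, 1 ≤ j → j ≤ n →
    j ≤ (Finset.univ.filter fun i : Fin n => f i ≤ m * (j - 1)).card

namespace CycleParking

lemma park_eq (m n : ℕ) (f : Fin n → ℕ) : IsMParking m n f ↔ IsMParking' m n f := Iff.rfl

lemma const_on_cycles {n : ℕ} (σ : Equiv.Perm (Fin n)) (f : Fin n → ℕ)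
    (hf : ∀ i, f (σ i) = f i) : ∀ i j : Fin n, σ.SameCycle i j → f i = f j := by
  have hinv : ∀ i, f (σ⁻¹ i) = f i := by
    intro i
    have := hf (σ⁻¹ i)
    rw [show σ (σ⁻¹ i) = i from σ.apply_symm_apply i] at this
    exact this.symm
  have hpow : ∀ (k : ℤ) (i : Fin n), f ((σ ^ k) i) = f i := by
    intro k
    induction k using Int.induction_on with
    | zero => simp
    | succ k ih =>
      intro i
      have : ((σ : Equiv.Perm (Fin n)) ^ ((k : ℤ) + 1)) i = (σ ^ (k : ℤ)) (σ i) := by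
        rw [zpow_add_one, Equiv.Perm.mul_apply]
      rw [this, ih, hf]
    | pred k ih =>
      intro i
      have : ((σ : Equiv.Perm (Fin n)) ^ (-(k : ℤ) - 1)) i = (σ ^ (-(k : ℤ))) (σ⁻¹ i) := by
        rw [zpow_sub_one, Equiv.Perm.mul_apply]
      rw [this, ih, hinv]
  rintro i j ⟨k, hk⟩
  rw [← hk, hpow]

end CycleParking

open CycleParking in
theorem card_parking_functions_fixed (m n : ℕ) (hm : 1 ≤ m) (hn : 1 ≤ n)
    (σ : Equiv.Perm (Fin n)) :
    (Nat.card {f : Fin n → ℕ // IsMParking m n f ∧ ∀ i, f (σ i) = f i} : ℚ)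
      = (m * n + 1 : ℚ) ^ ((numCycles σ : ℤ) - 1) := by
  classical
  set PF := {f : Fin n → ℕ // IsMParking m n f ∧ ∀ i, f (σ i) = f i} with hPF
  -- the forward map
  let F : PF × ZMod (m * n + 1) → (Cycles σ → ZMod (m * n + 1)) := fun p =>
    Quotient.lift (fun i => ((p.1.1 i : ZMod (m * n + 1)) + p.2))
      (fun i j h => by
        have := const_on_cycles σ p.1.1 p.1.2.2 i j h
        simp [this])
  have hF : ∀ (p : PF × ZMod (m * n + 1)) (i : Fin n),
      F p (Quotient.mk _ i) = (p.1.1 i : ZMod (m * n + 1)) + p.2 := fun _ _ => rfl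
  have hbij : Function.Bijective F := by
    constructor
    · rintro ⟨⟨f, hfp, hfc⟩, c⟩ ⟨⟨g, hgp, hgc⟩, d⟩ h
      have hvals : ∀ i : Fin n, (f i : ZMod (m * n + 1)) + c = (g i : ZMod (m * n + 1)) + d := by
        intro i
        have := congrFun h (Quotient.mk _ i)
        simpa [hF] using this
      -- the common function a
      set a : Fin n → ZMod (m * n + 1) := fun i => (f i : ZMod (m * n + 1)) + c with ha
      have hQ1 : IsMParking' m n (fun i => (a i + (-c)).val) := by
        have : (fun i => (a i + (-c)).val) = f := by
          funext i
          simp [ha, ZMod.val_cast_of_lt (parking_lt hn f hfp i)]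
        rw [this]
        exact hfp
      have hQ2 : IsMParking' m n (fun i => (a i + (-d)).val) := by
        have : (fun i => (a i + (-d)).val) = g := by
          funext i
          have := hvals i
          simp only [ha]
          rw [this]
          simp [ZMod.val_cast_of_lt (parking_lt hn g hgp i)]
        rw [this]
        exact hgp
      obtain ⟨c₀, _, huniq⟩ := existsUnique_c hm hn a
      have hcd : (-c : ZMod (m * n + 1)) = -d := by
        rw [huniq _ hQ1, huniq _ hQ2]
      have hcd' : c = d := by
        have := congrArg Neg.neg hcd
        simpa using this
      subst hcd'
      have hfg : f = g := by
        funext i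
        have := hvals i
        rw [add_left_inj] at this
        have h1 : ((f i : ZMod (m * n + 1))).val = ((g i : ZMod (m * n + 1))).val := by rw [this]
        rwa [ZMod.val_cast_of_lt (parking_lt hn f hfp i),
          ZMod.val_cast_of_lt (parking_lt hn g hgp i)] at h1
      simp [hfg]
    · intro g
      set a : Fin n → ZMod (m * n + 1) := fun i => g (Quotient.mk _ i) with ha
      obtain ⟨c, hc, _⟩ := existsUnique_c hm hn a
      have hapark : IsMParking m n (fun i => (a i + c).val) := hc
      have hainv : ∀ i : Fin n, (fun i => (a i + c).val) (σ i) = (fun i => (a i + c).val) i := by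
        intro i
        have : (Quotient.mk (Equiv.Perm.SameCycle.setoid σ) (σ i)) = Quotient.mk _ i := by
          apply Quotient.sound
          exact ⟨-1, by simp⟩
        simp only [ha, this]
      refine ⟨⟨⟨fun i => (a i + c).val, hapark, hainv⟩, -c⟩, ?_⟩
      funext x
      induction x using Quotient.ind with
      | _ i =>
        rw [hF]
        simp only
        rw [ZMod.natCast_val, ZMod.cast_id]
        ring_nf
        rfl
  have hcardeq : Nat.card (PF × ZMod (m * n + 1)) = Nat.card (Cycles σ → ZMod (m * n + 1)) :=
    Nat.card_eq_of_bijective F hbij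
  have hfin : Finite (Cycles σ) := Quotient.finite _
  have hzc : Nat.card (ZMod (m * n + 1)) = m * n + 1 := Nat.card_zmod _
  rw [Nat.card_prod, Nat.card_fun, hzc] at hcardeq
  have hpos : 1 ≤ numCycles σ := by
    have : Nonempty (Cycles σ) := ⟨Quotient.mk _ ⟨0, by omega⟩⟩
    have := Nat.card_pos (α := Cycles σ)
    unfold numCycles
    omega
  have hcard : Nat.card PF = (m * n + 1) ^ (numCycles σ - 1) := by
    have h2 : (m * n + 1) ^ (numCycles σ) = (m * n + 1) ^ (numCycles σ - 1) * (m * n + 1) := by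
      rw [← pow_succ]
      congr 1
      omega
    rw [show Nat.card (Cycles σ) = numCycles σ from rfl] at hcardeq
    rw [h2] at hcardeq
    exact Nat.eq_of_mul_eq_mul_right (by omega) hcardeq
  rw [hcard]
  rw [show ((numCycles σ : ℤ) - 1) = ((numCycles σ - 1 : ℕ) : ℤ) by omega, zpow_natCast]
  push_cast
  ring
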